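/- For integers t, m with 2 ≤ t < m and S = Δ(m) \ {2m - t}, the reduced pseudo-Frobenius set rPF(S) = {x ∈ ℤ \ S : F(S) - m(S) + 1 ≤ x ≤ F(S)} coincides with PF(S), and hence S has maximal reduced type (s(S) = t(S) = t). -/

import Mathlib

/-- A numerical semigroup: a subset of ℕ containing 0, closed under addition,
with finite complement. -/
noncomputable def IsNumericalSemigroup (S : Set ℕ) : Prop :=
  0 ∈ S ∧ (∀ a ∈ S, ∀ b ∈ S, a + b ∈ S) ∧ Sᶜ.Finite

/-- The half-line Δ(m) = {0} ∪ {x : m ≤ x}. -/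
noncomputable def Delta (m : ℕ) : Set ℕ := {0} ∪ {x | m ≤ x}

/-- Multiplicity: least nonzero element. -/
noncomputable def mult (S : Set ℕ) : ℕ := sInf {s ∈ S | s ≠ 0}

/-- Frobenius number: largest gap. -/
noncomputable def frob (S : Set ℕ) : ℕ := sSup Sᶜ

/-- Genus: number of gaps. -/
noncomputable def genus (S : Set ℕ) : ℕ := Sᶜ.ncard

/-- The image of S in ℤ. -/
noncomputable def ZS (S : Set ℕ) : Set ℤ := (fun n : ℕ => (n : ℤ)) '' S

/-- Pseudo-Frobenius numbers (as integers). -/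
noncomputable def PF (S : Set ℕ) : Set ℤ :=
  {x | x ∉ ZS S ∧ ∀ s ∈ S, s ≠ 0 → x + (s : ℤ) ∈ ZS S}

/-- Reduced pseudo-Frobenius set. -/
noncomputable def rPF (S : Set ℕ) : Set ℤ :=
  {x | x ∉ ZS S ∧ (frob S : ℤ) - (mult S : ℤ) + 1 ≤ x ∧ x ≤ (frob S : ℤ)}

/-- Type t(S). -/
noncomputable def typ (S : Set ℕ) : ℕ := (PF S).ncard

/-- Reduced type s(S). -/
noncomputable def redtyp (S : Set ℕ) : ℕ := (rPF S).ncard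

/-- Apéry set of n in S. -/
noncomputable def Ap (S : Set ℕ) (n : ℕ) : Set ℕ := {s ∈ S | ∀ u : ℕ, s = u + n → u ∉ S}

/-- Minimal system of generators. -/
noncomputable def msg (S : Set ℕ) : Set ℕ :=
  (S \ {0}) \ {x | ∃ a ∈ S \ {0}, ∃ b ∈ S \ {0}, x = a + b}

/-- Embedding dimension. -/
noncomputable def embdim (S : Set ℕ) : ℕ := (msg S).ncard

/-- Second smallest minimal generator. -/
noncomputable def secondGen (S : Set ℕ) : ℕ := sInf (msg S \ {mult S})

theorem stmt3 (t m : ℕ) (ht : 2 ≤ t) (htm : t < m)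
    (S : Set ℕ) (hS : S = Delta m \ {2 * m - t}) :
    rPF S = PF S ∧ redtyp S = typ S ∧ typ S = t := by
  have hm3 : 3 ≤ m := by omega
  have hmem : ∀ n : ℕ, n ∈ S ↔ (n = 0 ∨ m ≤ n) ∧ n ≠ 2 * m - t := by
    intro n
    subst hS
    simp [Delta, Set.mem_union, Set.mem_setOf_eq]
  have hZS : ∀ x : ℤ, x ∈ ZS S ↔
      (0 ≤ x ∧ (x = 0 ∨ (m : ℤ) ≤ x) ∧ x ≠ 2 * (m : ℤ) - t) := by
    intro x
    simp only [ZS, Set.mem_image]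
    constructor
    · rintro ⟨n, hn, rfl⟩
      rw [hmem] at hn
      omega
    · rintro ⟨h0, h1, h2⟩
      exact ⟨x.toNat, by rw [hmem]; omega, by omega⟩
  have hfrob : frob S = 2 * m - t := by
    have hc : ∀ n : ℕ, n ∈ Sᶜ ↔ ((1 ≤ n ∧ n < m) ∨ n = 2 * m - t) := by
      intro n
      simp only [Set.mem_compl_iff, hmem]
      omega
    rw [frob]
    apply le_antisymm
    · apply csSup_le ⟨2 * m - t, (hc _).2 (by omega)⟩
      intro b hb
      rw [hc] at hb
      omega
    · apply le_csSup
      · exact ⟨2 * m - t, fun b hb => by rw [hc] at hb; omega⟩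
      · exact (hc _).2 (by omega)
  have hmult : mult S = m := by
    have hmS : m ∈ {s ∈ S | s ≠ 0} := ⟨(hmem m).2 ⟨Or.inr le_rfl, by omega⟩, by omega⟩
    rw [mult]
    apply le_antisymm
    · exact Nat.sInf_le hmS
    · apply le_csInf ⟨m, hmS⟩
      rintro b ⟨hb, hb0⟩
      rw [hmem] at hb
      omega
  set F : Finset ℤ := Finset.Icc ((m : ℤ) - t + 1) ((m : ℤ) - 1) ∪ {2 * (m : ℤ) - t} with hF
  have hmemF : ∀ x : ℤ, x ∈ F ↔
      (((m : ℤ) - t + 1 ≤ x ∧ x ≤ (m : ℤ) - 1) ∨ x = 2 * (m : ℤ) - t) := by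
    intro x
    simp [hF, Finset.mem_union, Finset.mem_Icc]
    tauto
  have hrPF : rPF S = ↑F := by
    ext x
    simp only [rPF, Set.mem_setOf_eq, hZS, hfrob, hmult, Finset.coe_union,
      Finset.mem_coe, hmemF]
    omega
  have hPF : PF S = ↑F := by
    ext x
    simp only [PF, Set.mem_setOf_eq, hZS, Finset.mem_coe, hmemF]
    constructor
    · rintro ⟨hx1, hx2⟩
      by_contra hcon
      push_neg at hcon
      -- x ∉ ZS means x < 0, or 1 ≤ x < m, or x = 2m - t
      rcases (by omega : x < 0 ∨ (1 ≤ x ∧ x < (m : ℤ) ∧ x ≠ 2 * (m : ℤ) - t)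
          ∨ x = 2 * (m : ℤ) - t) with h | h | h
      · -- x < 0 : find s with x + s = m - 1 or m - 2
        by_cases hcase : (m : ℤ) - 1 - x = 2 * (m : ℤ) - t
        · have hx2' : x ≤ -2 := by omega
          have hs : ((m : ℤ) - 2 - x).toNat ∈ S := by
            rw [hmem]; omega
          have := hx2 _ hs (by omega)
          omega
        · have hs : ((m : ℤ) - 1 - x).toNat ∈ S := by
            rw [hmem]; omega
          have := hx2 _ hs (by omega)
          omega
      · -- 1 ≤ x < m, x ≠ 2m - t, and (by hcon) x ≤ m - t
        have hxle : x ≤ (m : ℤ) - t := by omega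
        have hs : (2 * (m : ℤ) - t - x).toNat ∈ S := by
          rw [hmem]; omega
        have := hx2 _ hs (by omega)
        omega
      · exact hcon.2 h
    · intro hx
      constructor
      · omega
      · intro s hs hs0
        rw [hmem] at hs
        omega
  have hcard : F.card = t := by
    have hdisj : Disjoint (Finset.Icc ((m : ℤ) - t + 1) ((m : ℤ) - 1))
        ({2 * (m : ℤ) - t} : Finset ℤ) := by
      simp only [Finset.disjoint_singleton_right, Finset.mem_Icc]
      omega
    rw [hF, Finset.card_union_of_disjoint hdisj, Int.card_Icc, Finset.card_singleton]
    omega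
  refine ⟨hrPF.trans hPF.symm, ?_, ?_⟩
  · rw [redtyp, typ, hrPF, hPF]
  · rw [typ, hPF, Set.ncard_coe_finset, hcard]
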